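/- Let Ω₁ ⊂ ℍ_s^n be real-path-connected, let Ω₂ ⊂ ℍ_s^n be Ω₁-stem-preserving, and let f : Ω₂ → ℍ be path-slice. Define F^{f,s}_{Ω₁} := F^{f,c}_{Ω₁} * F^f_{Ω₁}, where F^{f,c}_{Ω₁} := (conj(F^{f,1}_{Ω₁}), conj(F^{f,2}_{Ω₁})) and * is the pointwise star-product on ℍ². Then for every γ ∈ 𝒫(ℂ^n, Ω₁): (a) F^{f,s}_{Ω₁}(γ) = ( conj(F^{f,1}_{Ω₁}(γ))·F^{f,1}_{Ω₁}(γ) − conj(F^{f,2}_{Ω₁}(γ))·F^{f,2}_{Ω₁}(γ), conj(F^{f,2}_{Ω₁}(γ))·F^{f,1}_{Ω₁}(γ) + conj( conj(F^{f,2}_{Ω₁}(γ))·F^{f,1}_{Ω₁}(γ) ) ), and both components are real numbers; (b) F^{f,s}_{Ω₁} is a path-slice stem function of the symmetrization f^s_{Ω₁}, i.e. f^s_{Ω₁}(γ^I(1)) = F^{f,s,1}_{Ω₁}(γ) + I·F^{f,s,2}_{Ω₁}(γ) for every I ∈ 𝕊(Ω₁, γ). -/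

import Mathlib

open scoped Quaternion
open Classical

attribute [local instance] Classical.propDecidable

noncomputable section

/-- Continuous-path carrier type: maps from `[0,1]` to `ℂⁿ`. -/
abbrev PathC (n : ℕ) := unitInterval → (Fin n → ℂ)

/-- The sphere of quaternionic imaginary units `𝕊 = {I : I² = -1}`. -/
def SQ : Set ℍ[ℝ] := {I | I ^ 2 = -1}

/-- A quaternion is real if it is the image of a real number. -/
def IsRealQ (p : ℍ[ℝ]) : Prop := ∃ r : ℝ, p = (r : ℍ[ℝ])

/-- `Ψ_i^I : ℂⁿ → ℂ_Iⁿ`, componentwise `x + y i ↦ x + y I`. -/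
def psi {n : ℕ} (I : ℍ[ℝ]) (z : Fin n → ℂ) : Fin n → ℍ[ℝ] :=
  fun k => ((z k).re : ℍ[ℝ]) + (z k).im • I

/-- The slice `ℂ_I = {x + y I}` as a subset of the quaternions. -/
def CI (I : ℍ[ℝ]) : Set ℍ[ℝ] := {p | ∃ x y : ℝ, p = (x : ℍ[ℝ]) + y • I}

/-- The weakly slice cone `ℍ_sⁿ = ⋃_{I ∈ 𝕊} ℂ_Iⁿ`. -/
def HSliceCone (n : ℕ) : Set (Fin n → ℍ[ℝ]) := ⋃ I ∈ SQ, Set.range (psi (n := n) I)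

/-- Membership in `𝒫(ℂⁿ)`: continuous with real initial point. -/
def IsPathP {n : ℕ} (γ : PathC n) : Prop :=
  Continuous γ ∧ ∀ k, ((γ 0) k).im = 0

/-- `γ^I ⊂ Ω`. -/
def pathInSlice {n : ℕ} (Ω : Set (Fin n → ℍ[ℝ])) (I : ℍ[ℝ]) (γ : PathC n) : Prop :=
  ∀ t, psi I (γ t) ∈ Ω

/-- `𝕊(Ω, γ) = {I ∈ 𝕊 : γ^I ⊂ Ω}`. -/
def SGamma {n : ℕ} (Ω : Set (Fin n → ℍ[ℝ])) (γ : PathC n) : Set ℍ[ℝ] :=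
  {I | I ∈ SQ ∧ pathInSlice Ω I γ}

/-- `γ ∈ 𝒫(ℂⁿ, Ω)`. -/
def PathIn {n : ℕ} (Ω : Set (Fin n → ℍ[ℝ])) (γ : PathC n) : Prop :=
  IsPathP γ ∧ ∃ I, I ∈ SGamma Ω γ

/-- `F` is a path-slice stem function of `f` on `Ω`. -/
def IsStem {n : ℕ} (Ω : Set (Fin n → ℍ[ℝ])) (f : (Fin n → ℍ[ℝ]) → ℍ[ℝ])
    (F : PathC n → ℍ[ℝ] × ℍ[ℝ]) : Prop :=
  ∀ γ, PathIn Ω γ → ∀ I ∈ SGamma Ω γ, f (psi I (γ 1)) = (F γ).1 + I * (F γ).2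

/-- `f` is a path-slice function on `Ω`. -/
def PathSlice {n : ℕ} (Ω : Set (Fin n → ℍ[ℝ])) (f : (Fin n → ℍ[ℝ]) → ℍ[ℝ]) : Prop :=
  ∃ F, IsStem Ω f F

/-- `Ω` is real-path-connected. -/
def RealPathConnected {n : ℕ} (Ω : Set (Fin n → ℍ[ℝ])) : Prop :=
  ∀ q ∈ Ω, ∃ γ : PathC n, PathIn Ω γ ∧ ∃ I ∈ SGamma Ω γ, psi I (γ 1) = q

/-- `Ω₂` is `Ω₁`-stem-preserving. -/
def StemPreserving {n : ℕ} (Ω₁ Ω₂ : Set (Fin n → ℍ[ℝ])) : Prop :=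
  (∀ γ : PathC n, PathIn Ω₁ γ → (SGamma Ω₂ γ).Nontrivial) ∧
  (∀ α β : PathC n, PathIn Ω₁ α → PathIn Ω₁ β → α 1 = β 1 →
    ¬ ∃ I, SGamma Ω₂ α ∩ SGamma Ω₂ β = {I})

/-- `Ω` is self-stem-preserving. -/
def SelfStemPreserving {n : ℕ} (Ω : Set (Fin n → ℍ[ℝ])) : Prop :=
  RealPathConnected Ω ∧ StemPreserving Ω Ω

/-- The map `𝕴 : ℍ_sⁿ → 𝕊 ∪ {0}`. -/
def frakI {n : ℕ} (q : Fin n → ℍ[ℝ]) : ℍ[ℝ] :=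
  if h : ∀ k, IsRealQ (q k) then 0
  else
    let k := (Finset.univ.filter fun k => ¬ IsRealQ (q k)).min' (by
      push_neg at h
      obtain ⟨k, hk⟩ := h
      exact ⟨k, Finset.mem_filter.mpr ⟨Finset.mem_univ k, hk⟩⟩)
    ‖q k - ((q k).re : ℍ[ℝ])‖⁻¹ • (q k - ((q k).re : ℍ[ℝ]))

/-- A choice of path-slice stem function of `f` (on paths in `Ω`); by
the results of Dou–Jin–Ren–Yang its restriction to `𝒫(ℂⁿ, Ω₁)` is the canonical `F^f_{Ω₁}`. -/
def stemOf {n : ℕ} (Ω : Set (Fin n → ℍ[ℝ])) (f : (Fin n → ℍ[ℝ]) → ℍ[ℝ]) :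
    PathC n → ℍ[ℝ] × ℍ[ℝ] :=
  Classical.epsilon (IsStem Ω f)

/-- The function `ℱ^f_{Ω₁} : Ω₁ → ℍ²` induced by the stem of `f` (path-slice on `Ω₂`). -/
def scrF {n : ℕ} (Ω₁ Ω₂ : Set (Fin n → ℍ[ℝ])) (f : (Fin n → ℍ[ℝ]) → ℍ[ℝ])
    (q : Fin n → ℍ[ℝ]) : ℍ[ℝ] × ℍ[ℝ] :=
  if ∀ k, IsRealQ (q k) then (f q, 0)
  else stemOf Ω₂ f (Classical.epsilon (fun γ : PathC n =>
    PathIn Ω₁ γ ∧ pathInSlice Ω₁ (frakI q) γ ∧ psi (frakI q) (γ 1) = q))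

/-- The `Ω₁`-slice conjugation `f^c_{Ω₁}`. -/
def sliceConj {n : ℕ} (Ω₁ Ω₂ : Set (Fin n → ℍ[ℝ])) (f : (Fin n → ℍ[ℝ]) → ℍ[ℝ]) :
    (Fin n → ℍ[ℝ]) → ℍ[ℝ] :=
  fun q => star (scrF Ω₁ Ω₂ f q).1 + frakI q * star (scrF Ω₁ Ω₂ f q).2

/-- The `*`-product `g * f` of a path-slice `g : Ω₁ → ℍ` with `f : Ω₂ → ℍ`. -/
def starProdF {n : ℕ} (Ω₁ Ω₂ : Set (Fin n → ℍ[ℝ])) (g f : (Fin n → ℍ[ℝ]) → ℍ[ℝ]) :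
    (Fin n → ℍ[ℝ]) → ℍ[ℝ] :=
  fun q => g q * (scrF Ω₁ Ω₂ f q).1 + frakI q * g q * (scrF Ω₁ Ω₂ f q).2

/-- The symmetrization `f^s_{Ω₁} = f^c_{Ω₁} * f`. -/
def symmF {n : ℕ} (Ω₁ Ω₂ : Set (Fin n → ℍ[ℝ])) (f : (Fin n → ℍ[ℝ]) → ℍ[ℝ]) :
    (Fin n → ℍ[ℝ]) → ℍ[ℝ] :=
  starProdF Ω₁ Ω₂ (sliceConj Ω₁ Ω₂ f) f

/-- The pointwise `*`-product on `ℍ²`. -/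
def starPair (p q : ℍ[ℝ] × ℍ[ℝ]) : ℍ[ℝ] × ℍ[ℝ] :=
  (p.1 * q.1 - p.2 * q.2, p.2 * q.1 + p.1 * q.2)

/-- Slice-open sets: every slice is open (pulled back to `ℂⁿ` via `Ψ_i^I`). -/
def SliceOpen {n : ℕ} (U : Set (Fin n → ℍ[ℝ])) : Prop :=
  ∀ I ∈ SQ, IsOpen {z : Fin n → ℂ | psi I z ∈ U}

/-- Weakly slice regular functions: each slice restriction is left `I`-holomorphic. -/
def SliceRegular {n : ℕ} (Ω : Set (Fin n → ℍ[ℝ])) (f : (Fin n → ℍ[ℝ]) → ℍ[ℝ]) : Prop :=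
  ∀ I ∈ SQ, ∀ z : Fin n → ℂ, psi I z ∈ Ω →
    DifferentiableWithinAt ℝ (fun w => f (psi I w)) {w | psi I w ∈ Ω} z ∧
    ∀ ℓ : Fin n,
      fderivWithin ℝ (fun w => f (psi I w)) {w | psi I w ∈ Ω} z (Pi.single ℓ 1)
        + I * fderivWithin ℝ (fun w => f (psi I w)) {w | psi I w ∈ Ω} z (Pi.single ℓ Complex.I)
        = 0

/-- The ball `B_I(q, r)` inside the slice `ℂ_Iⁿ`. -/
def BI {n : ℕ} (I : ℍ[ℝ]) (q : Fin n → ℍ[ℝ]) (r : ℝ) : Set (Fin n → ℍ[ℝ]) :=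
  {p | p ∈ Set.range (psi (n := n) I) ∧ dist p q < r}

/-- The slice topology. -/
def sliceTop (n : ℕ) : TopologicalSpace (Fin n → ℍ[ℝ]) where
  IsOpen := SliceOpen
  isOpen_univ := by intro I _; simpa using isOpen_univ
  isOpen_inter := by
    intro s t hs ht I hI
    have h : {z : Fin n → ℂ | psi I z ∈ s ∩ t}
        = {z : Fin n → ℂ | psi I z ∈ s} ∩ {z : Fin n → ℂ | psi I z ∈ t} := by
      ext z; simp [Set.mem_inter_iff]
    rw [h]
    exact (hs I hI).inter (ht I hI)
  isOpen_sUnion := by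
    intro S hS I hI
    have h : {z : Fin n → ℂ | psi I z ∈ ⋃₀ S} = ⋃ s ∈ S, {z : Fin n → ℂ | psi I z ∈ s} := by
      ext z; simp
    rw [h]
    exact isOpen_biUnion fun s hs => hS s hs I hI

/-- Slice-domains: nonempty slice-open sets connected in the slice topology. -/
def SliceDomain {n : ℕ} (Ω : Set (Fin n → ℍ[ℝ])) : Prop :=
  SliceOpen Ω ∧ @IsConnected _ (sliceTop n) Ω

/-- Concatenation `γ · ℒ_{γ(1)}^z` of a path with the segment from `γ(1)` to `z`. -/
def concatSeg {n : ℕ} (γ : PathC n) (z : Fin n → ℂ) : PathC n := fun t =>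
  if h : (t : ℝ) ≤ 1 / 2 then
    γ ⟨2 * (t : ℝ), ⟨by linarith [t.2.1], by linarith⟩⟩
  else
    (1 - (2 * (t : ℝ) - 1)) • γ 1 + (2 * (t : ℝ) - 1) • z

/-- The action of `σ` on `ℍ²`: `σ(p₁, p₂) = (-p₂, p₁)`. -/
def sigmaAct (p : ℍ[ℝ] × ℍ[ℝ]) : ℍ[ℝ] × ℍ[ℝ] := (-p.2, p.1)

/-- `F : 𝒫(ℂⁿ, Ω) → ℍ²` is holomorphic at the path `γ`. -/
def StemHoloAt {n : ℕ} (Ω : Set (Fin n → ℍ[ℝ])) (F : PathC n → ℍ[ℝ] × ℍ[ℝ])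
    (γ : PathC n) : Prop :=
  ∃ r > 0, (∀ z ∈ Metric.ball (γ 1) r, PathIn Ω (concatSeg γ z)) ∧
    ∀ z ∈ Metric.ball (γ 1) r,
      DifferentiableAt ℝ (fun w => F (concatSeg γ w)) z ∧
      ∀ ℓ : Fin n,
        fderiv ℝ (fun w => F (concatSeg γ w)) z (Pi.single ℓ 1)
          + sigmaAct (fderiv ℝ (fun w => F (concatSeg γ w)) z (Pi.single ℓ Complex.I)) = 0

/-- `F` is holomorphic (at every path of `𝒫(ℂⁿ, Ω)`). -/
def StemHolo {n : ℕ} (Ω : Set (Fin n → ℍ[ℝ])) (F : PathC n → ℍ[ℝ] × ℍ[ℝ]) : Prop :=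
  ∀ γ, PathIn Ω γ → StemHoloAt Ω F γ

/-- `E` is a complex-analytic subset of the open set `U ⊂ ℂⁿ`. -/
def IsComplexAnalyticSubset {n : ℕ} (U E : Set (Fin n → ℂ)) : Prop :=
  E ⊆ U ∧ ∀ z ∈ U, ∃ V, V ⊆ U ∧ IsOpen V ∧ z ∈ V ∧
    ∃ (m : ℕ) (h : Fin m → (Fin n → ℂ) → ℂ),
      (∀ j, DifferentiableOn ℂ (h j) V) ∧ E ∩ V = {w | w ∈ V ∧ ∀ j, h j w = 0}

/-- `A` is a path-slice analytic subset of the slice-domain `Ω`. -/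
def PathSliceAnalytic {n : ℕ} (Ω A : Set (Fin n → ℍ[ℝ])) : Prop :=
  A = Ω ∨ ∀ γ : PathC n, PathIn Ω γ →
    ∃ r > 0, ∃ rI : ℍ[ℝ] → ℝ, (∀ I ∈ SGamma Ω γ, rI I ∈ Set.Ioc (0 : ℝ) r) ∧
      ∃ E : Set (Fin n → ℂ), IsComplexAnalyticSubset (Metric.ball (γ 1) r) E ∧
        E ≠ Metric.ball (γ 1) r ∧
        ∀ I ∈ SGamma Ω γ, A ∩ BI I (psi I (γ 1)) (rI I) ⊆ psi I '' E


namespace Aux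

lemma SQ_mul_self {I : ℍ[ℝ]} (hI : I ∈ SQ) : I * I = -1 := by
  have := hI; rw [SQ, Set.mem_setOf_eq, sq] at this; exact this

lemma SQ_re {I : ℍ[ℝ]} (hI : I ∈ SQ) : I.re = 0 := by
  have h := SQ_mul_self hI
  have h1 := congrArg QuaternionAlgebra.re h
  have h2 := congrArg QuaternionAlgebra.imI h
  have h3 := congrArg QuaternionAlgebra.imJ h
  have h4 := congrArg QuaternionAlgebra.imK h
  simp [Quaternion.re_mul, Quaternion.imI_mul, Quaternion.imJ_mul, Quaternion.imK_mul]
    at h1 h2 h3 h4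
  have e2 : I.re * I.imI = 0 := by linarith
  have e3 : I.re * I.imJ = 0 := by linarith
  have e4 : I.re * I.imK = 0 := by linarith
  have e2' : I.re * I.imI * I.imI = 0 := by rw [e2, zero_mul]
  have e3' : I.re * I.imJ * I.imJ = 0 := by rw [e3, zero_mul]
  have e4' : I.re * I.imK * I.imK = 0 := by rw [e4, zero_mul]
  have hm : I.re * (I.re * I.re - I.imI * I.imI - I.imJ * I.imJ - I.imK * I.imK)
      = I.re * (-1) := by rw [h1]
  have key : I.re * (I.re ^ 2 + 1) = 0 := by nlinarith [hm, e2', e3', e4']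
  rcases mul_eq_zero.1 key with h | h
  · exact h
  · nlinarith [sq_nonneg I.re]

lemma SQ_ne_zero {I : ℍ[ℝ]} (hI : I ∈ SQ) : I ≠ 0 := by
  intro h
  have := SQ_mul_self hI
  rw [h, mul_zero] at this
  exact absurd this.symm (by norm_num)

lemma SQ_norm {I : ℍ[ℝ]} (hI : I ∈ SQ) : ‖I‖ = 1 := by
  have h : ‖I‖ * ‖I‖ = 1 := by rw [← norm_mul, SQ_mul_self hI, norm_neg, norm_one]
  nlinarith [norm_nonneg I]

lemma SQ_neg {I : ℍ[ℝ]} (hI : I ∈ SQ) : -I ∈ SQ := by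
  rw [SQ, Set.mem_setOf_eq, sq] at hI ⊢
  rw [neg_mul_neg]; exact hI

lemma psi_inj {n : ℕ} {I : ℍ[ℝ]} (hI : I ∈ SQ) {z w : Fin n → ℂ}
    (h : psi I z = psi I w) : z = w := by
  funext k
  have hk := congrFun h k
  have hre : (z k).re = (w k).re := by
    have := congrArg QuaternionAlgebra.re hk
    simpa [psi, Quaternion.re_smul, SQ_re hI] using this
  have him : (z k).im = (w k).im := by
    have h2 : (z k).im • I = (w k).im • I := by
      have h0 : ((z k).re : ℍ[ℝ]) + (z k).im • I = ((w k).re : ℍ[ℝ]) + (w k).im • I := hk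
      rw [hre] at h0
      exact add_left_cancel h0
    have h3 : ((z k).im - (w k).im) • I = 0 := by rw [sub_smul, h2, sub_self]
    rcases smul_eq_zero.1 h3 with h4 | h4
    · linarith [sub_eq_zero.1 (by linarith [h4] : (z k).im - (w k).im = 0)]
    · exact absurd h4 (SQ_ne_zero hI)
  exact Complex.ext hre him

lemma psi_real {n : ℕ} (I K : ℍ[ℝ]) {z : Fin n → ℂ} (hz : ∀ k, (z k).im = 0) :
    psi K z = psi I z := by
  funext k; simp [psi, hz k]

lemma psi_neg_conj {n : ℕ} (I : ℍ[ℝ]) (z : Fin n → ℂ) :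
    psi (-I) (fun k => (starRingEnd ℂ) (z k)) = psi I z := by
  funext k
  simp [psi, Complex.conj_re, Complex.conj_im, neg_smul, smul_neg]

/-- The conjugated path. -/
def cpath {n : ℕ} (γ : PathC n) : PathC n := fun t k => (starRingEnd ℂ) (γ t k)

lemma cpath_pathP {n : ℕ} {γ : PathC n} (h : IsPathP γ) : IsPathP (cpath γ) := by
  constructor
  · exact continuous_pi fun k =>
      Complex.continuous_conj.comp ((continuous_apply k).comp h.1)
  · intro k; simp [cpath, Complex.conj_im, h.2 k]

lemma cpath_slice {n : ℕ} {Ω : Set (Fin n → ℍ[ℝ])} {K : ℍ[ℝ]} {γ : PathC n}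
    (h : pathInSlice Ω K γ) : pathInSlice Ω (-K) (cpath γ) := by
  intro t
  have : psi (-K) (cpath γ t) = psi K (γ t) := psi_neg_conj K (γ t)
  rw [this]; exact h t

/-- Concatenation of `α` with the reverse of `β` (both ending at the same point). -/
def catRev {n : ℕ} (α β : PathC n) : PathC n := fun t =>
  if (t : ℝ) ≤ 1 / 2 then α (Set.projIcc 0 1 zero_le_one (2 * (t : ℝ)))
  else β (Set.projIcc 0 1 zero_le_one (2 - 2 * (t : ℝ)))

lemma catRev_zero {n : ℕ} (α β : PathC n) : catRev α β 0 = α 0 := by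
  have h0 : ((0 : unitInterval) : ℝ) = 0 := rfl
  rw [catRev, if_pos (by rw [h0]; norm_num)]
  norm_num [Set.projIcc]

lemma catRev_cont {n : ℕ} {α β : PathC n} (hα : Continuous α) (hβ : Continuous β)
    (hend : α 1 = β 1) : Continuous (catRev α β) := by
  apply Continuous.if_le
  · exact hα.comp (continuous_projIcc.comp (by fun_prop))
  · exact hβ.comp (continuous_projIcc.comp (by fun_prop))
  · exact continuous_subtype_val
  · exact continuous_const
  · intro t ht
    have h1 : 2 * (t : ℝ) = 1 := by rw [ht]; norm_num
    have h2 : 2 - 2 * (t : ℝ) = 1 := by rw [h1]; norm_num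
    rw [h2, h1]
    have e : Set.projIcc (0:ℝ) 1 zero_le_one 1 = (1 : unitInterval) := by
      rw [Set.projIcc_right]; exact Subtype.ext rfl
    rw [e, hend]

lemma catRev_slice_of {n : ℕ} {Ω : Set (Fin n → ℍ[ℝ])} {K : ℍ[ℝ]} {α β : PathC n}
    (hα : pathInSlice Ω K α) (hβ : pathInSlice Ω K β) :
    pathInSlice Ω K (catRev α β) := by
  intro t
  rw [catRev]
  split
  · exact hα _
  · exact hβ _

lemma catRev_slice_left {n : ℕ} {Ω : Set (Fin n → ℍ[ℝ])} {K : ℍ[ℝ]} {α β : PathC n}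
    (h : pathInSlice Ω K (catRev α β)) : pathInSlice Ω K α := by
  intro s
  have hs2 : ((s : ℝ) / 2) ∈ Set.Icc (0:ℝ) 1 := ⟨by linarith [s.2.1], by linarith [s.2.2]⟩
  have := h ⟨(s : ℝ) / 2, hs2⟩
  rw [catRev, if_pos (by simp; linarith [s.2.2])] at this
  have he : Set.projIcc (0:ℝ) 1 zero_le_one (2 * ((s:ℝ)/2)) = s := by
    have : 2 * ((s:ℝ)/2) = (s : ℝ) := by ring
    rw [this, Set.projIcc_of_mem zero_le_one s.2]
  rwa [he] at this

lemma catRev_slice_right {n : ℕ} {Ω : Set (Fin n → ℍ[ℝ])} {K : ℍ[ℝ]} {α β : PathC n}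
    (hend : α 1 = β 1) (h : pathInSlice Ω K (catRev α β)) : pathInSlice Ω K β := by
  intro s
  by_cases hs : (s : ℝ) = 1
  · have hhalf : ((1:ℝ)/2) ∈ Set.Icc (0:ℝ) 1 := by norm_num
    have := h ⟨1/2, hhalf⟩
    rw [catRev, if_pos (by norm_num)] at this
    have he : Set.projIcc (0:ℝ) 1 zero_le_one (2 * ((1:ℝ)/2)) = (1 : unitInterval) := by
      norm_num [Set.projIcc_right]
    rw [he, hend] at this
    have hs1 : s = 1 := Subtype.ext hs
    rwa [hs1]
  · have hs1 : (s : ℝ) < 1 := lt_of_le_of_ne s.2.2 hs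
    have ht : (1 - (s : ℝ)/2) ∈ Set.Icc (0:ℝ) 1 := ⟨by linarith [s.2.2], by linarith [s.2.1]⟩
    have := h ⟨1 - (s:ℝ)/2, ht⟩
    rw [catRev, if_neg (by simp; linarith)] at this
    have he : Set.projIcc (0:ℝ) 1 zero_le_one (2 - 2 * (1 - (s:ℝ)/2)) = s := by
      have : 2 - 2 * (1 - (s:ℝ)/2) = (s : ℝ) := by ring
      rw [this, Set.projIcc_of_mem zero_le_one s.2]
    rwa [he] at this

/-- Key uniqueness: stems of `f` agree on paths in `𝒫(ℂⁿ,Ω₁)` with common slice and endpoint. -/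
lemma stem_eq {n : ℕ} {Ω₁ Ω₂ : Set (Fin n → ℍ[ℝ])} {f : (Fin n → ℍ[ℝ]) → ℍ[ℝ]}
    {F : PathC n → ℍ[ℝ] × ℍ[ℝ]}
    (hsp : StemPreserving Ω₁ Ω₂) (hF : IsStem Ω₂ f F) {α β : PathC n}
    (hα : PathIn Ω₁ α) (hβ : PathIn Ω₁ β) {K : ℍ[ℝ]}
    (hKα : K ∈ SGamma Ω₁ α) (hKβ : K ∈ SGamma Ω₁ β)
    (hend : α 1 = β 1) : F α = F β := by
  have hμIn : PathIn Ω₁ (catRev α β) :=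
    ⟨⟨catRev_cont hα.1.1 hβ.1.1 hend, fun k => by rw [catRev_zero]; exact hα.1.2 k⟩,
      K, hKα.1, catRev_slice_of hKα.2 hKβ.2⟩
  obtain ⟨K₁, hK₁, K₂, hK₂, hne⟩ := hsp.1 (catRev α β) hμIn
  have hK₁α : K₁ ∈ SGamma Ω₂ α := ⟨hK₁.1, catRev_slice_left hK₁.2⟩
  have hK₁β : K₁ ∈ SGamma Ω₂ β := ⟨hK₁.1, catRev_slice_right hend hK₁.2⟩
  have hK₂α : K₂ ∈ SGamma Ω₂ α := ⟨hK₂.1, catRev_slice_left hK₂.2⟩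
  have hK₂β : K₂ ∈ SGamma Ω₂ β := ⟨hK₂.1, catRev_slice_right hend hK₂.2⟩
  have hαIn : PathIn Ω₂ α := ⟨hα.1, K₁, hK₁α⟩
  have hβIn : PathIn Ω₂ β := ⟨hβ.1, K₁, hK₁β⟩
  have e1 : (F α).1 + K₁ * (F α).2 = (F β).1 + K₁ * (F β).2 := by
    rw [← hF α hαIn K₁ hK₁α, ← hF β hβIn K₁ hK₁β, hend]
  have e2 : (F α).1 + K₂ * (F α).2 = (F β).1 + K₂ * (F β).2 := by
    rw [← hF α hαIn K₂ hK₂α, ← hF β hβIn K₂ hK₂β, hend]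
  have h12 : (K₁ - K₂) * ((F α).2 - (F β).2) = 0 := by
    have e1' : K₁ * (F α).2 - K₁ * (F β).2 = (F β).1 - (F α).1 := by
      linear_combination (norm := noncomm_ring) e1
    have e2' : K₂ * (F α).2 - K₂ * (F β).2 = (F β).1 - (F α).1 := by
      linear_combination (norm := noncomm_ring) e2
    linear_combination (norm := noncomm_ring) e1' - e2'
  have h2 : (F α).2 = (F β).2 := by
    rcases mul_eq_zero.1 h12 with h | h
    · exact absurd (sub_eq_zero.1 h) hne
    · exact sub_eq_zero.1 h
  have h1 : (F α).1 = (F β).1 := by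
    have := e1
    rw [h2] at this
    exact add_right_cancel this
  exact Prod.ext h1 h2

/-- The stem at the conjugated path. -/
lemma stem_conj {n : ℕ} {Ω₁ Ω₂ : Set (Fin n → ℍ[ℝ])} {f : (Fin n → ℍ[ℝ]) → ℍ[ℝ]}
    {F : PathC n → ℍ[ℝ] × ℍ[ℝ]}
    (hsp : StemPreserving Ω₁ Ω₂) (hF : IsStem Ω₂ f F) {γ : PathC n}
    (hγ : PathIn Ω₁ γ) : F (cpath γ) = ((F γ).1, -(F γ).2) := by
  obtain ⟨K₁, hK₁, K₂, hK₂, hne⟩ := hsp.1 γ hγ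
  have hγIn : PathIn Ω₂ γ := ⟨hγ.1, K₁, hK₁⟩
  have hcK₁ : -K₁ ∈ SGamma Ω₂ (cpath γ) := ⟨SQ_neg hK₁.1, cpath_slice hK₁.2⟩
  have hcK₂ : -K₂ ∈ SGamma Ω₂ (cpath γ) := ⟨SQ_neg hK₂.1, cpath_slice hK₂.2⟩
  have hcIn : PathIn Ω₂ (cpath γ) := ⟨cpath_pathP hγ.1, -K₁, hcK₁⟩
  have key : ∀ K : ℍ[ℝ], K ∈ SGamma Ω₂ γ → -K ∈ SGamma Ω₂ (cpath γ) →
      (F (cpath γ)).1 + -K * (F (cpath γ)).2 = (F γ).1 + K * (F γ).2 := by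
    intro K hK hcK
    rw [← hF (cpath γ) hcIn (-K) hcK, ← hF γ hγIn K hK]
    congr 1
    exact psi_neg_conj K (γ 1)
  have e1 := key K₁ hK₁ hcK₁
  have e2 := key K₂ hK₂ hcK₂
  have h12 : (K₁ - K₂) * ((F (cpath γ)).2 + (F γ).2) = 0 := by
    linear_combination (norm := noncomm_ring) e2 - e1
  have h2 : (F (cpath γ)).2 = -(F γ).2 := by
    rcases mul_eq_zero.1 h12 with h | h
    · exact absurd (sub_eq_zero.1 h) hne
    · linear_combination (norm := noncomm_ring) h
  have h1 : (F (cpath γ)).1 = (F γ).1 := by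
    have := e1
    rw [h2] at this
    linear_combination (norm := noncomm_ring) this
  exact Prod.ext h1 h2

lemma final_alg {I a b : ℍ[ℝ]} (h2 : I * I = -1) :
    (star a + I * star b) * a + I * (star a + I * star b) * b
      = (star a * a - star b * b) + I * (star b * a + star a * b) := by
  calc (star a + I * star b) * a + I * (star a + I * star b) * b
      = star a * a + I * (star b * a) + (I * (star a * b) + I * I * (star b * b)) := by
        noncomm_ring
    _ = star a * a + I * (star b * a) + (I * (star a * b) + (-1) * (star b * b)) := by rw [h2]
    _ = (star a * a - star b * b) + I * (star b * a + star a * b) := by noncomm_ring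

end Aux

/-- explicit form and reality of the symmetrized stem, and the fact that
it is a path-slice stem function of the symmetrization `f^s_{Ω₁}`. -/
theorem symm_stem {n : ℕ} (Ω₁ Ω₂ : Set (Fin n → ℍ[ℝ]))
    (h1 : Ω₁ ⊆ HSliceCone n) (h2 : Ω₂ ⊆ HSliceCone n)
    (hrpc : RealPathConnected Ω₁) (hsp : StemPreserving Ω₁ Ω₂)
    (f : (Fin n → ℍ[ℝ]) → ℍ[ℝ]) (hf : PathSlice Ω₂ f) :
    (∀ γ : PathC n, PathIn Ω₁ γ →
      starPair (star (stemOf Ω₂ f γ).1, star (stemOf Ω₂ f γ).2) (stemOf Ω₂ f γ)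
        = (star (stemOf Ω₂ f γ).1 * (stemOf Ω₂ f γ).1
            - star (stemOf Ω₂ f γ).2 * (stemOf Ω₂ f γ).2,
          star (stemOf Ω₂ f γ).2 * (stemOf Ω₂ f γ).1
            + star (star (stemOf Ω₂ f γ).2 * (stemOf Ω₂ f γ).1)) ∧
      IsRealQ (starPair (star (stemOf Ω₂ f γ).1, star (stemOf Ω₂ f γ).2)
        (stemOf Ω₂ f γ)).1 ∧
      IsRealQ (starPair (star (stemOf Ω₂ f γ).1, star (stemOf Ω₂ f γ).2)
        (stemOf Ω₂ f γ)).2) ∧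
    IsStem Ω₁ (symmF Ω₁ Ω₂ f)
      (fun γ => starPair (star (stemOf Ω₂ f γ).1, star (stemOf Ω₂ f γ).2)
        (stemOf Ω₂ f γ)) := by
  have hF : IsStem Ω₂ f (stemOf Ω₂ f) := Classical.epsilon_spec hf
  constructor
  · intro γ hγ
    refine ⟨?_, ?_, ?_⟩
    · simp only [starPair]
      refine Prod.ext rfl ?_
      rw [star_mul, star_star]
    · simp only [starPair]
      refine ⟨Quaternion.normSq (stemOf Ω₂ f γ).1 - Quaternion.normSq (stemOf Ω₂ f γ).2, ?_⟩
      rw [Quaternion.star_mul_self, Quaternion.star_mul_self]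
      norm_cast
    · simp only [starPair]
      refine ⟨2 * (star (stemOf Ω₂ f γ).2 * (stemOf Ω₂ f γ).1).re, ?_⟩
      rw [show star (stemOf Ω₂ f γ).1 * (stemOf Ω₂ f γ).2
          = star (star (stemOf Ω₂ f γ).2 * (stemOf Ω₂ f γ).1) by rw [star_mul, star_star]]
      exact Quaternion.self_add_star' _
  · intro γ hγ I hI
    have hISQ : I ∈ SQ := hI.1
    have hI2 : I * I = -1 := Aux.SQ_mul_self hISQ
    simp only [starPair]
    set q := psi I (γ 1) with hq
    by_cases hreal : ∀ k, IsRealQ (q k)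
    · -- the endpoint is real
      have him : ∀ k, ((γ 1) k).im = 0 := by
        intro k
        by_contra hk
        obtain ⟨r, hr⟩ := hreal k
        have hr' : (((γ 1) k).re : ℍ[ℝ]) + ((γ 1) k).im • I = (r : ℍ[ℝ]) := hr
        have h1 : ((γ 1) k).im • I = (r : ℍ[ℝ]) - (((γ 1) k).re : ℍ[ℝ]) :=
          eq_sub_of_add_eq' hr'
        have hIeq : I = (((γ 1) k).im)⁻¹ • ((r : ℍ[ℝ]) - (((γ 1) k).re : ℍ[ℝ])) := by
          rw [← h1, smul_smul, inv_mul_cancel₀ hk, one_smul]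
        apply Aux.SQ_ne_zero hISQ
        ext
        · exact Aux.SQ_re hISQ
        · rw [hIeq]; simp
        · rw [hIeq]; simp
        · rw [hIeq]; simp
      have hqreal : ∀ K : ℍ[ℝ], psi K (γ 1) = q :=
        fun K => (Aux.psi_real I K him).trans hq.symm
      obtain ⟨K₁, hK₁, K₂, hK₂, hne⟩ := hsp.1 γ hγ
      have hγ2 : PathIn Ω₂ γ := ⟨hγ.1, K₁, hK₁⟩
      have e1 := hF γ hγ2 K₁ hK₁
      have e2 := hF γ hγ2 K₂ hK₂
      rw [hqreal K₁] at e1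
      rw [hqreal K₂] at e2
      have hb0 : (stemOf Ω₂ f γ).2 = 0 := by
        have h12 : (K₁ - K₂) * (stemOf Ω₂ f γ).2 = 0 := by
          linear_combination (norm := noncomm_ring) e2 - e1
        rcases mul_eq_zero.1 h12 with h | h
        · exact absurd (sub_eq_zero.1 h) hne
        · exact h
      have hfq : f q = (stemOf Ω₂ f γ).1 := by rw [e1, hb0, mul_zero, add_zero]
      have hfrak : frakI q = 0 := by rw [frakI, dif_pos hreal]
      have hscr : scrF Ω₁ Ω₂ f q = (f q, 0) := by rw [scrF, if_pos hreal]
      simp only [symmF, starProdF, sliceConj, hscr, hfrak, hfq, hb0]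
      simp
    · -- the endpoint is not real
      have hne' : (Finset.univ.filter fun k => ¬ IsRealQ (q k)).Nonempty := by
        push_neg at hreal
        obtain ⟨k, hk⟩ := hreal
        exact ⟨k, Finset.mem_filter.mpr ⟨Finset.mem_univ k, hk⟩⟩
      set k₀ := (Finset.univ.filter fun k => ¬ IsRealQ (q k)).min' hne' with hk₀
      have hfrak0 : frakI q
          = ‖q k₀ - ((q k₀).re : ℍ[ℝ])‖⁻¹ • (q k₀ - ((q k₀).re : ℍ[ℝ])) := by
        rw [frakI, dif_neg hreal]
      have hk₀nr : ¬ IsRealQ (q k₀) := (Finset.mem_filter.mp (Finset.min'_mem _ hne')).2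
      have hre : (q k₀).re = ((γ 1) k₀).re := by
        show ((((γ 1) k₀).re : ℍ[ℝ]) + ((γ 1) k₀).im • I).re = _
        simp [Quaternion.re_smul, Aux.SQ_re hISQ]
      have hsub : q k₀ - ((q k₀).re : ℍ[ℝ]) = ((γ 1) k₀).im • I := by
        rw [hre]
        show (((γ 1) k₀).re : ℍ[ℝ]) + ((γ 1) k₀).im • I - _ = _
        rw [add_sub_cancel_left]
      have hy : ((γ 1) k₀).im ≠ 0 := by
        intro h0
        exact hk₀nr ⟨((γ 1) k₀).re, by
          show (((γ 1) k₀).re : ℍ[ℝ]) + ((γ 1) k₀).im • I = _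
          rw [h0, zero_smul, add_zero]⟩
      have hnorm : ‖((γ 1) k₀).im • I‖ = |((γ 1) k₀).im| := by
        rw [norm_smul, Aux.SQ_norm hISQ, mul_one, Real.norm_eq_abs]
      have hfrak1 : frakI q = (|((γ 1) k₀).im|⁻¹ * ((γ 1) k₀).im) • I := by
        rw [hfrak0, hsub, hnorm, smul_smul]
      rcases lt_or_gt_of_ne hy with hyneg | hypos
      · -- frakI q = -I : compare with the conjugated path
        have hfrakI : frakI q = -I := by
          rw [hfrak1, abs_of_neg hyneg]
          rw [show (-((γ 1) k₀).im)⁻¹ * ((γ 1) k₀).im = -1 by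
            field_simp]
          rw [neg_one_smul]
        have hnISQ : -I ∈ SQ := Aux.SQ_neg hISQ
        have hcSG : -I ∈ SGamma Ω₁ (Aux.cpath γ) := ⟨hnISQ, Aux.cpath_slice hI.2⟩
        have hcIn : PathIn Ω₁ (Aux.cpath γ) := ⟨Aux.cpath_pathP hγ.1, -I, hcSG⟩
        have hcend : psi (-I) (Aux.cpath γ 1) = q := by
          rw [hq]; exact Aux.psi_neg_conj I (γ 1)
        have hδspec := Classical.epsilon_spec (p := fun γ' : PathC n =>
            PathIn Ω₁ γ' ∧ pathInSlice Ω₁ (frakI q) γ' ∧ psi (frakI q) (γ' 1) = q)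
          ⟨Aux.cpath γ, hcIn, by rw [hfrakI]; exact hcSG.2, by rw [hfrakI]; exact hcend⟩
        set δ := Classical.epsilon (fun γ' : PathC n =>
            PathIn Ω₁ γ' ∧ pathInSlice Ω₁ (frakI q) γ' ∧ psi (frakI q) (γ' 1) = q) with hδdef
        obtain ⟨hδIn, hδslice, hδend⟩ := hδspec
        rw [hfrakI] at hδslice hδend
        have hJδ : -I ∈ SGamma Ω₁ δ := ⟨hnISQ, hδslice⟩
        have hend : δ 1 = Aux.cpath γ 1 := Aux.psi_inj hnISQ (by rw [hδend, hcend])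
        have hFδ : stemOf Ω₂ f δ = ((stemOf Ω₂ f γ).1, -(stemOf Ω₂ f γ).2) := by
          rw [Aux.stem_eq hsp hF hδIn hcIn hJδ hcSG hend, Aux.stem_conj hsp hF hγ]
        have hscr : scrF Ω₁ Ω₂ f q = ((stemOf Ω₂ f γ).1, -(stemOf Ω₂ f γ).2) := by
          rw [scrF, if_neg hreal, ← hδdef, hFδ]
        simp only [symmF, starProdF, sliceConj, hscr, hfrakI]
        simp only [star_neg, mul_neg, neg_mul, neg_neg]
        exact Aux.final_alg hI2
      · -- frakI q = I : compare with γ itself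
        have hfrakI : frakI q = I := by
          rw [hfrak1, abs_of_pos hypos, inv_mul_cancel₀ hy, one_smul]
        have hδspec := Classical.epsilon_spec (p := fun γ' : PathC n =>
            PathIn Ω₁ γ' ∧ pathInSlice Ω₁ (frakI q) γ' ∧ psi (frakI q) (γ' 1) = q)
          ⟨γ, hγ, by rw [hfrakI]; exact hI.2, by rw [hfrakI, hq]⟩
        set δ := Classical.epsilon (fun γ' : PathC n =>
            PathIn Ω₁ γ' ∧ pathInSlice Ω₁ (frakI q) γ' ∧ psi (frakI q) (γ' 1) = q) with hδdef
        obtain ⟨hδIn, hδslice, hδend⟩ := hδspec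
        rw [hfrakI] at hδslice hδend
        have hJδ : I ∈ SGamma Ω₁ δ := ⟨hISQ, hδslice⟩
        have hend : δ 1 = γ 1 := Aux.psi_inj hISQ (by rw [hδend, hq])
        have hFδ : stemOf Ω₂ f δ = stemOf Ω₂ f γ :=
          Aux.stem_eq hsp hF hδIn hγ hJδ hI hend
        have hscr : scrF Ω₁ Ω₂ f q = stemOf Ω₂ f γ := by
          rw [scrF, if_neg hreal, ← hδdef, hFδ]
        simp only [symmF, starProdF, sliceConj, hscr, hfrakI]
        exact Aux.final_alg hI2


end
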